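/- Let d ≥ 1 and let ψ be a Muckenhoupt A₂-weight on ℝ^d. Then there exists r₀ ≥ 1 such that ∫_{B_r} ψ dx > 1 for all r ≥ r₀ and ∫_{r₀}^{∞} r / log(∫_{B_r} ψ dx) dr = +∞, where B_r = {x ∈ ℝ^d : ‖x‖ < r}. (The Sturm non-explosion integral test verified in the proof of Proposition 2.3, which yields conservativeness of the associated Dirichlet form.) -/

import Mathlib

open MeasureTheory Metric
open scoped ENNReal

/-- A measurable function `ψ : ℝ^d → ℝ` with `ψ > 0` Lebesgue-a.e. is a Muckenhoupt
`A₂`-weight if there is `A > 0` such that for every open ball `B`,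
`(∫_B ψ) (∫_B ψ⁻¹) ≤ A ⬝ (Leb B)²`. -/
def IsA2Weight (d : ℕ) (ψ : EuclideanSpace ℝ (Fin d) → ℝ) : Prop :=
  Measurable ψ ∧ (∀ᵐ x ∂(volume : Measure (EuclideanSpace ℝ (Fin d))), 0 < ψ x) ∧
  ∃ A : ℝ, 0 < A ∧ ∀ (x : EuclideanSpace ℝ (Fin d)) (r : ℝ), 0 < r →
    (∫⁻ y in ball x r, ENNReal.ofReal (ψ y)) *
      (∫⁻ y in ball x r, ENNReal.ofReal (ψ y)⁻¹) ≤
    ENNReal.ofReal A * (volume (ball x r)) ^ 2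



lemma lint_pos_aux {α : Type*} [MeasurableSpace α] (μ : Measure α) {ψ : α → ℝ}
    (hm : Measurable ψ) (hpos : ∀ᵐ x ∂μ, 0 < ψ x) (hne : μ Set.univ ≠ 0) :
    0 < ∫⁻ a, ENNReal.ofReal (ψ a) ∂μ := by
  rw [lintegral_pos_iff_support (hm.ennreal_ofReal)]
  set f : α → ℝ≥0∞ := fun a => ENNReal.ofReal (ψ a) with hf
  have hc : μ (Function.support f)ᶜ = 0 := by
    have hsub : ∀ᵐ a ∂μ, a ∈ Function.support f := by
      filter_upwards [hpos] with a ha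
      simp only [Function.mem_support, hf, ne_eq, ENNReal.ofReal_eq_zero, not_le]
      exact ha
    rw [ae_iff] at hsub
    convert hsub using 2
    rfl
  have h2 : μ Set.univ ≤ μ (Function.support f) + μ (Function.support f)ᶜ := by
    rw [← Set.union_compl_self (Function.support f)]
    exact measure_union_le _ _
  rw [hc, add_zero] at h2
  exact lt_of_lt_of_le (pos_iff_ne_zero.mpr hne) h2


lemma cs_aux {α : Type*} [MeasurableSpace α] (μ : Measure α) {ψ : α → ℝ}
    (hm : Measurable ψ) (hpos : ∀ᵐ x ∂μ, 0 < ψ x) :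
    (μ Set.univ) ^ 2 ≤ (∫⁻ a, ENNReal.ofReal (ψ a) ∂μ) * (∫⁻ a, ENNReal.ofReal (ψ a)⁻¹ ∂μ) := by
  have hpq : Real.HolderConjugate 2 2 := ⟨by norm_num, by norm_num, by norm_num⟩
  set f : α → ℝ≥0∞ := fun a => (ENNReal.ofReal (ψ a)) ^ (2⁻¹ : ℝ) with hfdef
  set g : α → ℝ≥0∞ := fun a => (ENNReal.ofReal ((ψ a)⁻¹)) ^ (2⁻¹ : ℝ) with hgdef
  have hf : AEMeasurable f μ := ((ENNReal.measurable_ofReal.comp hm).pow_const _).aemeasurable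
  have hg : AEMeasurable g μ := ((ENNReal.measurable_ofReal.comp hm.inv).pow_const _).aemeasurable
  have h := ENNReal.lintegral_mul_le_Lp_mul_Lq μ hpq hf hg
  have h1 : ∫⁻ a, (f * g) a ∂μ = μ Set.univ := by
    rw [← lintegral_one]
    apply lintegral_congr_ae
    filter_upwards [hpos] with a ha
    simp only [Pi.mul_apply, hfdef, hgdef]
    rw [← ENNReal.mul_rpow_of_nonneg _ _ (by norm_num : (0:ℝ) ≤ 2⁻¹),
      ← ENNReal.ofReal_mul ha.le, mul_inv_cancel₀ ha.ne', ENNReal.ofReal_one, ENNReal.one_rpow]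
  have h2 : ∀ a, f a ^ (2:ℝ) = ENNReal.ofReal (ψ a) := by
    intro a; simp only [hfdef]
    rw [← ENNReal.rpow_mul]; norm_num
  have h3 : ∀ a, g a ^ (2:ℝ) = ENNReal.ofReal ((ψ a)⁻¹) := by
    intro a; simp only [hgdef]
    rw [← ENNReal.rpow_mul]; norm_num
  simp only [h1, h2, h3] at h
  set I := ∫⁻ a, ENNReal.ofReal (ψ a) ∂μ
  set J := ∫⁻ a, ENNReal.ofReal ((ψ a)⁻¹) ∂μ
  calc (μ Set.univ)^2 = μ Set.univ * μ Set.univ := sq (μ Set.univ)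
  _ ≤ (I ^ ((1:ℝ)/2) * J ^ ((1:ℝ)/2)) * (I ^ ((1:ℝ)/2) * J ^ ((1:ℝ)/2)) := mul_le_mul' h h
  _ = (I ^ ((1:ℝ)/2) * I ^ ((1:ℝ)/2)) * (J ^ ((1:ℝ)/2) * J ^ ((1:ℝ)/2)) := by ring
  _ = I * J := by
    rw [← ENNReal.rpow_add_of_nonneg _ _ (by norm_num) (by norm_num),
      ← ENNReal.rpow_add_of_nonneg _ _ (by norm_num) (by norm_num)]
    norm_num
noncomputable def bm (d : ℕ) (ψ : EuclideanSpace ℝ (Fin d) → ℝ) (r : ℝ) : ℝ≥0∞ :=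
  ∫⁻ y in ball (0 : EuclideanSpace ℝ (Fin d)) r, ENNReal.ofReal (ψ y)

set_option maxHeartbeats 2000000 in
theorem main_aux (d : ℕ) (hd : 1 ≤ d) (ψ : EuclideanSpace ℝ (Fin d) → ℝ)
    (hmeas : Measurable ψ)
    (hpos : ∀ᵐ x ∂(volume : Measure (EuclideanSpace ℝ (Fin d))), 0 < ψ x)
    (A : ℝ) (hApos : 0 < A)
    (hA2 : ∀ (x : EuclideanSpace ℝ (Fin d)) (r : ℝ), 0 < r →
      (∫⁻ y in ball x r, ENNReal.ofReal (ψ y)) *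
        (∫⁻ y in ball x r, ENNReal.ofReal (ψ y)⁻¹) ≤
      ENNReal.ofReal A * (volume (ball x r)) ^ 2) :
    ∃ r₀ : ℝ, 1 ≤ r₀ ∧ (∀ r : ℝ, r₀ ≤ r → 1 < bm d ψ r) ∧
      (∫⁻ r in Set.Ioi r₀, ENNReal.ofReal (r / Real.log (bm d ψ r).toReal)) = ⊤ := by
  haveI : Nontrivial (EuclideanSpace ℝ (Fin d)) := by
    refine ⟨EuclideanSpace.single (⟨0, hd⟩ : Fin d) (1:ℝ), 0, fun h => ?_⟩
    have := congrArg norm h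
    rw [EuclideanSpace.norm_single, norm_zero, norm_one] at this
    norm_num at this
  -- basic measures
  have hvpos : ∀ (x : EuclideanSpace ℝ (Fin d)) (r : ℝ), 0 < r → 0 < volume (ball x r) :=
    fun x r hr => measure_ball_pos _ _ hr
  have hvfin : ∀ (x : EuclideanSpace ℝ (Fin d)) (r : ℝ), volume (ball x r) < ⊤ :=
    fun x r => measure_ball_lt_top
  have hvol : ∀ (c r : ℝ), 0 ≤ c →
      volume (ball (0 : EuclideanSpace ℝ (Fin d)) (c * r)) =
        ENNReal.ofReal (c ^ d) * volume (ball (0 : EuclideanSpace ℝ (Fin d)) r) := by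
    intro c r hc
    rw [Measure.addHaar_ball_mul volume _ hc, finrank_euclideanSpace_fin]
  -- positivity of weighted integrals
  have hμpos : ∀ (x : EuclideanSpace ℝ (Fin d)) (r : ℝ), 0 < r →
      0 < ∫⁻ y in ball x r, ENNReal.ofReal (ψ y) := by
    intro x r hr
    refine lint_pos_aux _ hmeas (ae_restrict_of_ae hpos) ?_
    rw [Measure.restrict_apply_univ]
    exact (hvpos x r hr).ne'
  have hνpos : ∀ (x : EuclideanSpace ℝ (Fin d)) (r : ℝ), 0 < r →
      0 < ∫⁻ y in ball x r, ENNReal.ofReal (ψ y)⁻¹ := by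
    intro x r hr
    refine lint_pos_aux _ hmeas.inv (ae_restrict_of_ae ?_) ?_
    · filter_upwards [hpos] with a ha; exact inv_pos.2 ha
    · rw [Measure.restrict_apply_univ]
      exact (hvpos x r hr).ne'
  -- Cauchy-Schwarz
  have hCS : ∀ (x : EuclideanSpace ℝ (Fin d)) (r : ℝ),
      (volume (ball x r)) ^ 2 ≤
        (∫⁻ y in ball x r, ENNReal.ofReal (ψ y)) *
          (∫⁻ y in ball x r, ENNReal.ofReal (ψ y)⁻¹) := by
    intro x r
    have := cs_aux (volume.restrict (ball x r)) hmeas (ae_restrict_of_ae hpos)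
    rwa [Measure.restrict_apply_univ] at this
  -- finiteness
  have hμfin : ∀ (x : EuclideanSpace ℝ (Fin d)) (r : ℝ), 0 < r →
      (∫⁻ y in ball x r, ENNReal.ofReal (ψ y)) ≠ ⊤ := by
    intro x r hr h
    have h1 := hA2 x r hr
    rw [h, ENNReal.top_mul (hνpos x r hr).ne'] at h1
    exact (ENNReal.mul_lt_top ENNReal.ofReal_lt_top
      (ENNReal.pow_lt_top (n := 2) (hvfin x r))).ne (top_le_iff.mp h1)
  have hνfin : ∀ (x : EuclideanSpace ℝ (Fin d)) (r : ℝ), 0 < r →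
      (∫⁻ y in ball x r, ENNReal.ofReal (ψ y)⁻¹) ≠ ⊤ := by
    intro x r hr h
    have h1 := hA2 x r hr
    rw [h, ENNReal.mul_top (hμpos x r hr).ne'] at h1
    exact (ENNReal.mul_lt_top ENNReal.ofReal_lt_top
      (ENNReal.pow_lt_top (n := 2) (hvfin x r))).ne (top_le_iff.mp h1)
  -- A ≥ 1
  have hA1 : 1 ≤ A := by
    have h1 := (hCS (0 : EuclideanSpace ℝ (Fin d)) 1).trans (hA2 0 1 one_pos)
    have h2 : (1 : ℝ≥0∞) * (volume (ball (0 : EuclideanSpace ℝ (Fin d)) 1)) ^ 2 ≤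
        ENNReal.ofReal A * (volume (ball (0 : EuclideanSpace ℝ (Fin d)) 1)) ^ 2 := by
      rwa [one_mul]
    have h3 := (ENNReal.mul_le_mul_iff_left (pow_ne_zero 2 (hvpos 0 1 one_pos).ne')
      (ENNReal.pow_ne_top (hvfin 0 1).ne)).mp h2
    exact ENNReal.one_le_ofReal.mp h3
  -- doubling
  have hdbl : ∀ r : ℝ, 0 < r →
      (∫⁻ y in ball (0 : EuclideanSpace ℝ (Fin d)) (2*r), ENNReal.ofReal (ψ y)) ≤
        ENNReal.ofReal (A * 4 ^ d) *
          ∫⁻ y in ball (0 : EuclideanSpace ℝ (Fin d)) r, ENNReal.ofReal (ψ y) := by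
    intro r hr
    set μ2 := ∫⁻ y in ball (0 : EuclideanSpace ℝ (Fin d)) (2*r), ENNReal.ofReal (ψ y) with hμ2
    set μ1 := ∫⁻ y in ball (0 : EuclideanSpace ℝ (Fin d)) r, ENNReal.ofReal (ψ y) with hμ1
    set ν1 := ∫⁻ y in ball (0 : EuclideanSpace ℝ (Fin d)) r, ENNReal.ofReal (ψ y)⁻¹ with hν1
    set ν2 := ∫⁻ y in ball (0 : EuclideanSpace ℝ (Fin d)) (2*r), ENNReal.ofReal (ψ y)⁻¹ with hν2
    have key : μ2 * ν1 ≤ (ENNReal.ofReal (A * 4 ^ d) * μ1) * ν1 := by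
      calc μ2 * ν1 ≤ μ2 * ν2 :=
            mul_le_mul_right (lintegral_mono_set (ball_subset_ball (by linarith))) _
        _ ≤ ENNReal.ofReal A * (volume (ball (0 : EuclideanSpace ℝ (Fin d)) (2*r)))^2 :=
            hA2 0 (2*r) (by linarith)
        _ = ENNReal.ofReal A * ENNReal.ofReal (4^d) *
              (volume (ball (0 : EuclideanSpace ℝ (Fin d)) r))^2 := by
            rw [hvol 2 r (by norm_num), mul_pow, ← ENNReal.ofReal_pow (by positivity)]
            rw [show ((2:ℝ)^d)^2 = 4^d by rw [← pow_mul, mul_comm d 2, pow_mul]; norm_num]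
            ring
        _ ≤ ENNReal.ofReal A * ENNReal.ofReal (4^d) * (μ1 * ν1) :=
            mul_le_mul_right (hCS 0 r) _
        _ = (ENNReal.ofReal (A * 4^d) * μ1) * ν1 := by
            rw [ENNReal.ofReal_mul hApos.le]; ring
    exact (ENNReal.mul_le_mul_iff_left (hνpos 0 r hr).ne' (hνfin 0 r hr)).mp key
  -- real mass function
  set M : ℝ → ℝ := fun r => (bm d ψ r).toReal with hM
  have hMpos : ∀ r : ℝ, 0 < r → 0 < M r := fun r hr =>
    ENNReal.toReal_pos (hμpos 0 r hr).ne' (hμfin 0 r hr)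
  have hMmono : ∀ r s : ℝ, 0 < r → r ≤ s → M r ≤ M s := by
    intro r s hr hrs
    exact ENNReal.toReal_mono (hμfin 0 s (lt_of_lt_of_le hr hrs))
      (lintegral_mono_set (ball_subset_ball hrs))
  set P : ℝ := A * 9 ^ d with hP
  have hP9 : 9 ≤ P := by
    have h9 : (9:ℝ) ≤ 9^d := by
      calc (9:ℝ) = 9^1 := (pow_one 9).symm
      _ ≤ 9^d := pow_le_pow_right₀ (by norm_num) hd
    nlinarith
  set θ : ℝ := P / (P - 1) with hθdef
  have hθ : 1 < θ := (one_lt_div (by linarith)).2 (by linarith)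
  have hstep : ∀ r : ℝ, 0 < r → θ * M r ≤ M (3 * r) := by
    intro r hr
    set x₀ : EuclideanSpace ℝ (Fin d) := EuclideanSpace.single (⟨0, hd⟩ : Fin d) (2*r) with hx₀def
    have hx₀ : dist x₀ (0 : EuclideanSpace ℝ (Fin d)) = 2*r := by
      rw [dist_zero_right, hx₀def, EuclideanSpace.norm_single, Real.norm_eq_abs,
        abs_of_pos (by linarith)]
    have hdisj : Disjoint (ball (0 : EuclideanSpace ℝ (Fin d)) r) (ball x₀ r) := by
      apply ball_disjoint_ball
      rw [dist_comm, hx₀]; linarith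
    have hsub3 : ball x₀ r ⊆ ball (0 : EuclideanSpace ℝ (Fin d)) (3*r) := by
      intro y hy
      rw [mem_ball] at hy ⊢
      calc dist y 0 ≤ dist y x₀ + dist x₀ 0 := dist_triangle _ _ _
        _ < r + 2*r := by rw [hx₀]; linarith [hy]
        _ = 3*r := by ring
    set μc := ∫⁻ y in ball x₀ r, ENNReal.ofReal (ψ y) with hμcdef
    have hsum : (∫⁻ y in ball (0 : EuclideanSpace ℝ (Fin d)) r, ENNReal.ofReal (ψ y)) + μc ≤
        ∫⁻ y in ball (0 : EuclideanSpace ℝ (Fin d)) (3*r), ENNReal.ofReal (ψ y) := by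
      rw [← lintegral_union measurableSet_ball hdisj]
      exact lintegral_mono_set (Set.union_subset (ball_subset_ball (by linarith)) hsub3)
    have hkey : (∫⁻ y in ball (0 : EuclideanSpace ℝ (Fin d)) (3*r), ENNReal.ofReal (ψ y)) ≤
        ENNReal.ofReal P * μc := by
      set μ3 := ∫⁻ y in ball (0 : EuclideanSpace ℝ (Fin d)) (3*r), ENNReal.ofReal (ψ y) with hμ3
      set ν3 := ∫⁻ y in ball (0 : EuclideanSpace ℝ (Fin d)) (3*r), ENNReal.ofReal (ψ y)⁻¹ with hν3
      set νc := ∫⁻ y in ball x₀ r, ENNReal.ofReal (ψ y)⁻¹ with hνc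
      have hv2 : (volume (ball (0 : EuclideanSpace ℝ (Fin d)) r))^2 ≠ 0 :=
        pow_ne_zero 2 (hvpos 0 r hr).ne'
      have hv2t : (volume (ball (0 : EuclideanSpace ℝ (Fin d)) r))^2 ≠ ⊤ :=
        ENNReal.pow_ne_top (hvfin 0 r).ne
      have key2 : μ3 * (volume (ball (0 : EuclideanSpace ℝ (Fin d)) r))^2 ≤
          (ENNReal.ofReal P * μc) * (volume (ball (0 : EuclideanSpace ℝ (Fin d)) r))^2 := by
        calc μ3 * (volume (ball (0 : EuclideanSpace ℝ (Fin d)) r))^2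
            = μ3 * (volume (ball x₀ r))^2 := by
              rw [Measure.addHaar_ball_center volume x₀]
          _ ≤ μ3 * (μc * νc) := mul_le_mul_right (hCS x₀ r) _
          _ ≤ μ3 * (μc * ν3) :=
              mul_le_mul_right (mul_le_mul_right (lintegral_mono_set hsub3) _) _
          _ = (μ3 * ν3) * μc := by ring
          _ ≤ (ENNReal.ofReal A *
                (volume (ball (0 : EuclideanSpace ℝ (Fin d)) (3*r)))^2) * μc :=
              mul_le_mul_left (hA2 0 (3*r) (by linarith)) _
          _ = (ENNReal.ofReal P * μc) *
                (volume (ball (0 : EuclideanSpace ℝ (Fin d)) r))^2 := by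
              rw [hvol 3 r (by norm_num), mul_pow, ← ENNReal.ofReal_pow (by positivity),
                show ((3:ℝ)^d)^2 = 9^d by rw [← pow_mul, mul_comm d 2, pow_mul]; norm_num,
                hP, ENNReal.ofReal_mul hApos.le]
              ring
      exact (ENNReal.mul_le_mul_iff_left hv2 hv2t).mp key2
    have hμc_le : μc ≤ ∫⁻ y in ball (0 : EuclideanSpace ℝ (Fin d)) (3*r), ENNReal.ofReal (ψ y) :=
      le_trans le_add_self hsum
    have hμcfin : μc ≠ ⊤ := fun h => hμfin 0 (3*r) (by linarith) (top_le_iff.mp (h ▸ hμc_le))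
    have hab : M r + μc.toReal ≤ M (3*r) := by
      have := ENNReal.toReal_mono (hμfin 0 (3*r) (by linarith)) hsum
      rwa [ENNReal.toReal_add (hμfin 0 r hr) hμcfin] at this
    have hbc : M (3*r) ≤ P * μc.toReal := by
      have := ENNReal.toReal_mono (ENNReal.mul_ne_top ENNReal.ofReal_ne_top hμcfin) hkey
      rwa [ENNReal.toReal_mul, ENNReal.toReal_ofReal (by positivity)] at this
    have hc0 : (0:ℝ) ≤ μc.toReal := ENNReal.toReal_nonneg
    have ha0 : 0 < M r := hMpos r hr
    rw [hθdef, div_mul_eq_mul_div, div_le_iff₀ (by linarith)]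
    nlinarith [hab, hbc]
  -- iterate reverse doubling
  have hiter : ∀ k : ℕ, θ ^ k * M 1 ≤ M (3 ^ k) := by
    intro k
    induction k with
    | zero => simp
    | succ k ih =>
      have h3k : (0:ℝ) < 3 ^ k := by positivity
      have hθ0 : (0:ℝ) < θ := lt_trans one_pos hθ
      calc θ ^ (k+1) * M 1 = θ * (θ ^ k * M 1) := by ring
        _ ≤ θ * M (3 ^ k) := mul_le_mul_of_nonneg_left ih hθ0.le
        _ ≤ M (3 * 3 ^ k) := hstep _ h3k
        _ = M (3 ^ (k+1)) := by rw [pow_succ, mul_comm]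
  obtain ⟨k, hk⟩ := pow_unbounded_of_one_lt (2 / M 1) hθ
  set r₀ : ℝ := 3 ^ k with hr₀def
  have hr₀1 : (1:ℝ) ≤ r₀ := one_le_pow₀ (by norm_num)
  have hr₀pos : (0:ℝ) < r₀ := by linarith
  have hM1 : 0 < M 1 := hMpos 1 one_pos
  have hMr₀ : 2 < M r₀ := by
    have h2 : 2 < θ ^ k * M 1 := by
      rw [div_lt_iff₀ hM1] at hk; linarith
    exact lt_of_lt_of_le h2 (hiter k)
  have hbig : ∀ r, r₀ ≤ r → 1 < M r := fun r hr =>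
    lt_of_lt_of_le (by linarith) (hMmono r₀ r hr₀pos hr)
  have bullet1 : ∀ r : ℝ, r₀ ≤ r → 1 < bm d ψ r := by
    intro r hr
    have hfin : bm d ψ r ≠ ⊤ := hμfin 0 r (by linarith)
    have h1 : (1:ℝ) < (bm d ψ r).toReal := hbig r hr
    calc (1:ℝ≥0∞) = ENNReal.ofReal 1 := ENNReal.ofReal_one.symm
      _ < ENNReal.ofReal ((bm d ψ r).toReal) :=
          (ENNReal.ofReal_lt_ofReal_iff (by linarith)).2 h1
      _ = bm d ψ r := ENNReal.ofReal_toReal hfin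
  -- upper growth
  set K : ℝ := A * 4 ^ d with hK
  have hK1 : 1 ≤ K := by
    have h4 : (1:ℝ) ≤ 4 ^ d := one_le_pow₀ (by norm_num)
    nlinarith
  have hKpos : (0:ℝ) < K := by linarith
  have hdblM : ∀ r : ℝ, 0 < r → M (2 * r) ≤ K * M r := by
    intro r hr
    have := ENNReal.toReal_mono (ENNReal.mul_ne_top ENNReal.ofReal_ne_top (hμfin 0 r hr))
      (hdbl r hr)
    rwa [ENNReal.toReal_mul, ENNReal.toReal_ofReal (by positivity)] at this
  have hup : ∀ n : ℕ, M (2 ^ n) ≤ K ^ n * M 1 := by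
    intro n
    induction n with
    | zero => simp
    | succ n ih =>
      have h2n : (0:ℝ) < 2 ^ n := by positivity
      calc M (2 ^ (n+1)) = M (2 * 2 ^ n) := by rw [pow_succ, mul_comm]
        _ ≤ K * M (2 ^ n) := hdblM _ h2n
        _ ≤ K * (K ^ n * M 1) := mul_le_mul_of_nonneg_left ih (by linarith)
        _ = K ^ (n+1) * M 1 := by ring
  set c : ℝ := 2 * Real.log K + |Real.log (M 1)| + 1 with hc
  have hlogK : 0 ≤ Real.log K := Real.log_nonneg hK1
  have hcpos : 0 < c := by nlinarith [abs_nonneg (Real.log (M 1))]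
  have hlog : ∀ r : ℝ, 1 ≤ r → Real.log (M r) ≤ c * r := by
    intro r hr
    set n : ℕ := ⌈r⌉₊ with hn
    have hrn : r ≤ (n:ℝ) := Nat.le_ceil r
    have hn2 : (n:ℝ) ≤ 2 * r := by
      have := Nat.ceil_lt_add_one (by linarith : (0:ℝ) ≤ r)
      linarith
    have hn2pow : (n:ℝ) ≤ 2 ^ n := by
      exact_mod_cast (Nat.lt_two_pow_self (n := n)).le
    have hrpow : r ≤ 2 ^ n := le_trans hrn hn2pow
    have hMle : M r ≤ K ^ n * M 1 := le_trans (hMmono r (2^n) (by linarith) hrpow) (hup n)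
    have hlog1 : Real.log (M r) ≤ Real.log (K ^ n * M 1) :=
      Real.log_le_log (hMpos r (by linarith)) hMle
    have hlog2 : Real.log (K ^ n * M 1) = n * Real.log K + Real.log (M 1) := by
      rw [Real.log_mul (pow_pos hKpos n).ne' (ne_of_gt hM1), Real.log_pow]
    have habs : Real.log (M 1) ≤ |Real.log (M 1)| := le_abs_self _
    have hnK : (n:ℝ) * Real.log K ≤ 2 * r * Real.log K :=
      mul_le_mul_of_nonneg_right hn2 hlogK
    calc Real.log (M r) ≤ (n:ℝ) * Real.log K + Real.log (M 1) := by rw [← hlog2]; exact hlog1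
      _ ≤ 2 * r * Real.log K + |Real.log (M 1)| * r + r := by
          nlinarith [abs_nonneg (Real.log (M 1))]
      _ = c * r := by rw [hc]; ring
  -- final divergence
  refine ⟨r₀, hr₀1, bullet1, ?_⟩
  rw [eq_top_iff]
  have hconst : (⊤:ℝ≥0∞) = ∫⁻ _ in Set.Ioi r₀, ENNReal.ofReal (1/c) := by
    rw [setLIntegral_const, Real.volume_Ioi,
      ENNReal.mul_top (ENNReal.ofReal_pos.mpr (by positivity)).ne']
  rw [hconst]
  apply lintegral_mono_ae
  rw [ae_restrict_iff' measurableSet_Ioi]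
  apply ae_of_all
  intro r hr
  rw [Set.mem_Ioi] at hr
  have hr1 : 1 ≤ r := by linarith
  have hL : 0 < Real.log ((bm d ψ r).toReal) := Real.log_pos (hbig r hr.le)
  have hLc : Real.log ((bm d ψ r).toReal) ≤ c * r := hlog r hr1
  apply ENNReal.ofReal_le_ofReal
  rw [div_le_div_iff₀ hcpos hL]
  nlinarith

/-- Sturm's non-explosion integral test for an `A₂`-weighted measure:
there is `r₀ ≥ 1` with `∫_{B_r} ψ dx > 1` for `r ≥ r₀` and
`∫_{r₀}^∞ r / log(ψdx(B_r)) dr = ∞` (proof of Proposition 2.3). -/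
theorem a2_sturm_test (d : ℕ) (hd : 1 ≤ d)
    (ψ : EuclideanSpace ℝ (Fin d) → ℝ) (hψ : IsA2Weight d ψ) :
    ∃ r₀ : ℝ, 1 ≤ r₀ ∧
      (∀ r : ℝ, r₀ ≤ r →
        1 < (∫⁻ y in ball (0 : EuclideanSpace ℝ (Fin d)) r, ENNReal.ofReal (ψ y))) ∧
      (∫⁻ r in Set.Ioi r₀,
        ENNReal.ofReal (r / Real.log
          ((∫⁻ y in ball (0 : EuclideanSpace ℝ (Fin d)) r,
              ENNReal.ofReal (ψ y)).toReal))) = ⊤ := by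
  obtain ⟨hmeas, hpos, A, hApos, hA2⟩ := hψ
  exact main_aux d hd ψ hmeas hpos A hApos hA2
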